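/- Let T = (t, †, η) be a j-relative monad. Then T is idempotent if and only if T admits a j-reflective resolution: that is, if and only if there exist a category C, functors ℓ : A ⥤ C and r : C ⥤ E with r fully faithful, and bijections φ_{a,c} : Hom_C(ℓ.obj a, c) ≃ Hom_E(j.obj a, r.obj c) natural in a and c, such that r.obj (ℓ.obj a) = t a for all a, φ(1_{ℓ.obj a}) = η_a, and r.map (φ⁻¹ f) = f† for every f : j.obj a ⟶ t b. Moreover, when T is idempotent such a resolution is given by the Kleisli category of T. -/

import Mathlib

open CategoryTheory

universe v₁ v₂ u₁ u₂

/-- A `j`-relative monad `T = (t, †, η)`. -/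
structure RelativeMonad {A : Type u₁} [Category.{v₁} A] {E : Type u₂} [Category.{v₂} E]
    (j : A ⥤ E) where
  /-- The underlying object assignment. -/
  t : A → E
  /-- The unit. -/
  unit : ∀ a : A, j.obj a ⟶ t a
  /-- The extension operator `f ↦ f†`. -/
  ext : ∀ (a b : A), (j.obj a ⟶ t b) → (t a ⟶ t b)
  unit_ext : ∀ {a b : A} (f : j.obj a ⟶ t b), unit a ≫ ext a b f = f
  ext_unit : ∀ a : A, ext a a (unit a) = 𝟙 (t a)
  ext_ext : ∀ {a b c : A} (f : j.obj a ⟶ t b) (g : j.obj b ⟶ t c),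
    ext a c (f ≫ ext b c g) = ext a b f ≫ ext b c g

variable {A : Type u₁} [Category.{v₁} A] {E : Type u₂} [Category.{v₂} E] {j : A ⥤ E}

/-- The Kleisli category of a `j`-relative monad: objects are those of `A`, and
morphisms `a ⟶ b` are morphisms `j a ⟶ t b` in `E`. -/
def RelativeMonad.Kl (_ : RelativeMonad j) : Type u₁ := A

instance (T : RelativeMonad j) : Category.{v₂} T.Kl where
  Hom a b := j.obj a ⟶ T.t b
  id a := T.unit a
  comp {a b c} f g := f ≫ T.ext b c g
  id_comp {a b} f := T.unit_ext f
  comp_id {a b} f := by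
    change f ≫ T.ext b b (T.unit b) = f
    exact (congrArg (fun x => f ≫ x) (T.ext_unit b)).trans (Category.comp_id f)
  assoc {a b c d} f g h := by
    change (f ≫ T.ext b c g) ≫ T.ext c d h = f ≫ T.ext b d (g ≫ T.ext c d h)
    exact (Category.assoc _ _ _).trans (congrArg (fun x => f ≫ x) (T.ext_ext g h).symm)

/-- The hom-map of the left adjoint `k_T : A ⥤ Kl(T)`. -/
def RelativeMonad.kTmap (T : RelativeMonad j) {a b : A} (f : a ⟶ b) :
    j.obj a ⟶ T.t b :=
  j.map f ≫ T.unit b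

/-- The left adjoint `k_T : A ⥤ Kl(T)`, the identity on objects. -/
def RelativeMonad.kT (T : RelativeMonad j) : A ⥤ T.Kl where
  obj a := a
  map {a b} f := T.kTmap f
  map_id a := by
    show j.map (𝟙 a) ≫ T.unit a = T.unit a
    rw [j.map_id, Category.id_comp]
  map_comp {a b c} f g := by
    show j.map (f ≫ g) ≫ T.unit c =
      (j.map f ≫ T.unit b) ≫ T.ext b c (j.map g ≫ T.unit c)
    rw [Category.assoc, T.unit_ext, j.map_comp, Category.assoc]

/-- The right adjoint `v_T : Kl(T) ⥤ E`, sending `a` to `t a` and `f` to `f†`. -/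
def RelativeMonad.vT (T : RelativeMonad j) : T.Kl ⥤ E where
  obj a := T.t a
  map {a b} f := T.ext a b f
  map_id a := T.ext_unit a
  map_comp {a b c} f g := T.ext_ext f g

/-- The hom-bijection `Kl(T)(k_T a, c) ≃ E(j a, v_T c)` of the Kleisli relative
adjunction, which is an identity. -/
def RelativeMonad.klEquiv (T : RelativeMonad j) (a : A) (c : T.Kl) :
    (T.kT.obj a ⟶ c) ≃ (j.obj a ⟶ T.vT.obj c) :=
  Equiv.refl _

/-- A `j`-relative monad `T` is idempotent if and only if it admits a `j`-reflective
resolution: a `j`-relative adjunction `ℓ ⊣_j r` with `r` fully faithful inducing `T`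
(meaning `r (ℓ a) = t a`, `φ (1) = η`, and `r.map (φ⁻¹ f) = f†`).  Moreover, when `T`
is idempotent, such a resolution is given by the Kleisli category of `T`. -/
theorem relativeMonad_idempotent_iff_jReflective_resolution (T : RelativeMonad j) :
    ((∀ a b : A, Function.Bijective (T.ext a b)) ↔
      ∃ (C : Type u₁) (_ : Category.{v₂} C) (ℓ : A ⥤ C) (r : C ⥤ E)
        (φ : ∀ (a : A) (c : C), (ℓ.obj a ⟶ c) ≃ (j.obj a ⟶ r.obj c))
        (ht : ∀ a : A, r.obj (ℓ.obj a) = T.t a),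
        (∀ c c' : C, Function.Bijective (fun g : c ⟶ c' => r.map g)) ∧
        (∀ {a a' : A} (u : a ⟶ a') {c : C} (g : ℓ.obj a' ⟶ c),
          φ a c (ℓ.map u ≫ g) = j.map u ≫ φ a' c g) ∧
        (∀ {a : A} {c c' : C} (g : ℓ.obj a ⟶ c) (v : c ⟶ c'),
          φ a c' (g ≫ v) = φ a c g ≫ r.map v) ∧
        (∀ a : A, φ a (ℓ.obj a) (𝟙 (ℓ.obj a)) = T.unit a ≫ eqToHom (ht a).symm) ∧
        (∀ {a b : A} (f : j.obj a ⟶ T.t b),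
          r.map ((φ a (ℓ.obj b)).symm (f ≫ eqToHom (ht b).symm)) =
            eqToHom (ht a) ≫ T.ext a b f ≫ eqToHom (ht b).symm)) ∧
    ((∀ a b : A, Function.Bijective (T.ext a b)) →
      (∀ c c' : T.Kl, Function.Bijective (fun g : c ⟶ c' => T.vT.map g)) ∧
      (∀ {a a' : A} (u : a ⟶ a') {c : T.Kl} (g : T.kT.obj a' ⟶ c),
        T.klEquiv a c (T.kT.map u ≫ g) = j.map u ≫ T.klEquiv a' c g) ∧
      (∀ {a : A} {c c' : T.Kl} (g : T.kT.obj a ⟶ c) (v : c ⟶ c'),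
        T.klEquiv a c' (g ≫ v) = T.klEquiv a c g ≫ T.vT.map v) ∧
      (∀ a : A, T.klEquiv a (T.kT.obj a) (𝟙 (T.kT.obj a)) = T.unit a) ∧
      (∀ {a b : A} (f : j.obj a ⟶ T.t b),
        T.vT.map ((T.klEquiv a (T.kT.obj b)).symm f) = T.ext a b f)) := by

  have key : ∀ (_ : ∀ a b : A, Function.Bijective (T.ext a b)),
      (∀ c c' : T.Kl, Function.Bijective (fun g : c ⟶ c' => T.vT.map g)) ∧
      (∀ {a a' : A} (u : a ⟶ a') {c : T.Kl} (g : T.kT.obj a' ⟶ c),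
        T.klEquiv a c (T.kT.map u ≫ g) = j.map u ≫ T.klEquiv a' c g) ∧
      (∀ {a : A} {c c' : T.Kl} (g : T.kT.obj a ⟶ c) (v : c ⟶ c'),
        T.klEquiv a c' (g ≫ v) = T.klEquiv a c g ≫ T.vT.map v) ∧
      (∀ a : A, T.klEquiv a (T.kT.obj a) (𝟙 (T.kT.obj a)) = T.unit a) ∧
      (∀ {a b : A} (f : j.obj a ⟶ T.t b),
        T.vT.map ((T.klEquiv a (T.kT.obj b)).symm f) = T.ext a b f) := by
    intro hbij
    refine ⟨hbij, ?_, ?_, ?_, ?_⟩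
    · intro a a' u c g
      show (j.map u ≫ T.unit a') ≫ T.ext a' c g = j.map u ≫ g
      exact (Category.assoc _ _ _).trans (congrArg (fun x => j.map u ≫ x) (T.unit_ext g))
    · intro a c c' g v; rfl
    · intro a; rfl
    · intro a b f; rfl
  constructor
  · constructor
    · intro hbij
      obtain ⟨h1, h2, h3, h4, h5⟩ := key hbij
      exact ⟨T.Kl, inferInstance, T.kT, T.vT, T.klEquiv, fun a => rfl, h1,
        fun u _ g => h2 u g, fun g v => h3 g v,
        fun a => by rw [h4 a]; exact (Category.comp_id (T.unit a)).symm, fun {a b} f => by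
          show T.vT.map ((T.klEquiv a (T.kT.obj b)).symm (f ≫ 𝟙 _)) = 𝟙 _ ≫ T.ext a b f ≫ 𝟙 _
          simp only [Category.comp_id, Category.id_comp]
          exact (congrArg (fun x => T.vT.map ((T.klEquiv a (T.kT.obj b)).symm x)) (Category.comp_id f)).trans (h5 f)⟩
    · rintro ⟨C, _, ℓ, r, φ, ht, hr, _, _, _, hc⟩ a b
      have heq : T.ext a b = fun f =>
          eqToHom (ht a).symm ≫
            r.map ((φ a (ℓ.obj b)).symm (f ≫ eqToHom (ht b).symm)) ≫ eqToHom (ht b) := by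
        funext f
        rw [hc f]
        simp
      rw [heq]
      have b1 : Function.Bijective (fun f : j.obj a ⟶ T.t b => f ≫ eqToHom (ht b).symm) :=
        ⟨fun x y h => by simpa using congrArg (· ≫ eqToHom (ht b)) h,
         fun g => ⟨g ≫ eqToHom (ht b), by simp⟩⟩
      have b2 := (φ a (ℓ.obj b)).symm.bijective
      have b3 := hr (ℓ.obj a) (ℓ.obj b)
      have b4 : Function.Bijective (fun g : r.obj (ℓ.obj a) ⟶ r.obj (ℓ.obj b) =>
          eqToHom (ht a).symm ≫ g ≫ eqToHom (ht b)) :=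
        ⟨fun x y h => by
          have := congrArg (fun z => eqToHom (ht a) ≫ z ≫ eqToHom (ht b).symm) h
          simpa using this,
         fun g => ⟨eqToHom (ht a) ≫ g ≫ eqToHom (ht b).symm, by simp⟩⟩
      exact b4.comp (b3.comp (b2.comp b1))
  · exact key
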